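/- Let d ≥ 1, k ∈ ℕ, r > 0, and let h : ℝ^d → [0,∞] be measurable. Then ∫_{B(0,r)} ‖x‖_2^{k+1} · (∫_0^1 (1−t)^k · h(t·x) dt) dx ≤ (r^{k+d}/(k+d)) · ∫_{B(0,r)} ‖y‖_2^{1−d} · h(y) dy, where B(0,r) = {x ∈ ℝ^d : ‖x‖_2 ≤ r} and the integrals are with respect to Lebesgue measure. -/

import Mathlib

open MeasureTheory
open scoped ENNReal

lemma aux_scale {d : ℕ} {t : ℝ} (ht : 0 < t)
    (φ : EuclideanSpace ℝ (Fin d) → ℝ≥0∞) (hφ : Measurable φ) :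
    ∫⁻ x, φ (t • x) = ENNReal.ofReal ((t ^ d)⁻¹) * ∫⁻ y, φ y := by
  have h1 : (volume : Measure (EuclideanSpace ℝ (Fin d))).map (t • ·)
      = ENNReal.ofReal |(t ^ Module.finrank ℝ (EuclideanSpace ℝ (Fin d)))⁻¹| • volume :=
    MeasureTheory.Measure.map_addHaar_smul _ ht.ne'
  have h2 : ∫⁻ x, φ (t • x)
      = ∫⁻ y, φ y ∂((volume : Measure (EuclideanSpace ℝ (Fin d))).map (t • ·)) :=
    (lintegral_map hφ (measurable_const_smul t)).symm
  rw [h2, h1, lintegral_smul_measure]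
  congr 1
  rw [finrank_euclideanSpace, Fintype.card_fin, abs_of_nonneg (by positivity)]

/-- The key change-of-variables estimate: for non-negative measurable `h`,
`∫_{B(0,r)} ‖x‖^{k+1} (∫_0^1 (1-t)^k h(tx) dt) dx
   ≤ (r^{k+d}/(k+d)) ∫_{B(0,r)} ‖y‖^{1-d} h(y) dy`. -/
theorem stmt13 {d : ℕ} (hd : 1 ≤ d) (k : ℕ) (r : ℝ) (hr : 0 < r)
    (h : EuclideanSpace ℝ (Fin d) → ℝ≥0∞) (hm : Measurable h) :
    (∫⁻ x in Metric.closedBall (0 : EuclideanSpace ℝ (Fin d)) r,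
        ENNReal.ofReal (‖x‖ ^ (k + 1)) *
          ∫⁻ t in Set.Ioo (0 : ℝ) 1, ENNReal.ofReal ((1 - t) ^ k) * h (t • x))
      ≤ ENNReal.ofReal (r ^ (k + d) / (k + d)) *
        ∫⁻ y in Metric.closedBall (0 : EuclideanSpace ℝ (Fin d)) r,
          ENNReal.ofReal (‖y‖ ^ (1 - (d : ℤ))) * h y := by
  set B : Set (EuclideanSpace ℝ (Fin d)) := Metric.closedBall 0 r with hBdef
  set g : EuclideanSpace ℝ (Fin d) → ℝ≥0∞ := fun y => ENNReal.ofReal (‖y‖ ^ (k + 1)) * h y with hgdef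
  have hgm : Measurable g := ((measurable_norm.pow_const _).ennreal_ofReal).mul hm
  set F : EuclideanSpace ℝ (Fin d) → ℝ → ℝ≥0∞ := fun x t =>
    ENNReal.ofReal (‖x‖ ^ (k + 1)) * (ENNReal.ofReal ((1 - t) ^ k) * h (t • x)) with hFdef
  set W : ℝ → EuclideanSpace ℝ (Fin d) → ℝ≥0∞ := fun t y =>
    ENNReal.ofReal ((1 - t) ^ k * (t ^ (d + k + 1))⁻¹) *
      (Metric.closedBall (0 : EuclideanSpace ℝ (Fin d)) (t * r)).indicator g y with hWdef
  -- measurability of uncurried F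
  have hFm : Measurable (Function.uncurry F) := by
    apply Measurable.mul
    · exact (measurable_fst.norm.pow_const _).ennreal_ofReal
    · apply ((measurable_const.sub measurable_snd).pow_const _).ennreal_ofReal.mul
      exact hm.comp ((continuous_snd.smul continuous_fst).measurable)
  -- measurability of uncurried W
  have hWm : Measurable (Function.uncurry W) := by
    have hset : MeasurableSet {p : ℝ × EuclideanSpace ℝ (Fin d) | ‖p.2‖ ≤ p.1 * r} := by
      apply measurableSet_le
      · exact measurable_snd.norm
      · exact measurable_fst.mul_const r
    have : Function.uncurry W = fun p : ℝ × EuclideanSpace ℝ (Fin d) =>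
        ENNReal.ofReal ((1 - p.1) ^ k * (p.1 ^ (d + k + 1))⁻¹) *
          {p : ℝ × EuclideanSpace ℝ (Fin d) | ‖p.2‖ ≤ p.1 * r}.indicator (fun q => g q.2) p := by
      funext p
      simp only [Function.uncurry, hWdef]
      congr 1
      by_cases hp : ‖p.2‖ ≤ p.1 * r <;>
        simp [Set.indicator_apply, mem_closedBall_zero_iff, hp]
    rw [this]
    exact (((measurable_const.sub measurable_fst).pow_const _).mul
        ((measurable_fst.pow_const _).inv)).ennreal_ofReal.mul
      ((hgm.comp measurable_snd).indicator hset)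
  -- Claim A: change of variables for fixed t
  have claimA : ∀ t ∈ Set.Ioo (0:ℝ) 1, (∫⁻ x in B, F x t) = ∫⁻ y, W t y := by
    intro t ht
    obtain ⟨ht0, ht1⟩ := ht
    have htne : (t:ℝ) ≠ 0 := ht0.ne'
    set ψ : EuclideanSpace ℝ (Fin d) → ℝ≥0∞ := fun y =>
      ENNReal.ofReal ((1 - t) ^ k * (t ^ (k + 1))⁻¹ * ‖y‖ ^ (k + 1)) * h y with hψdef
    have hψm : Measurable ψ :=
      (((measurable_norm.pow_const _).const_mul _).ennreal_ofReal).mul hm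
    have key : ∀ x, B.indicator (fun x => F x t) x
        = (Metric.closedBall (0 : EuclideanSpace ℝ (Fin d)) (t * r)).indicator ψ (t • x) := by
      intro x
      have hmem : x ∈ B ↔ t • x ∈ Metric.closedBall (0 : EuclideanSpace ℝ (Fin d)) (t * r) := by
        simp only [hBdef, mem_closedBall_zero_iff, norm_smul, Real.norm_eq_abs,
          abs_of_pos ht0]
        exact (mul_le_mul_iff_right₀ ht0).symm
      by_cases hx : x ∈ B
      · rw [Set.indicator_of_mem hx, Set.indicator_of_mem (hmem.1 hx)]
        show F x t = ψ (t • x)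
        simp only [hFdef, hψdef, norm_smul, Real.norm_eq_abs, abs_of_pos ht0]
        rw [← mul_assoc, ← ENNReal.ofReal_mul (by positivity)]
        congr 2
        rw [mul_pow]
        field_simp
      · rw [Set.indicator_of_notMem hx, Set.indicator_of_notMem (fun c => hx (hmem.2 c))]
    calc ∫⁻ x in B, F x t
        = ∫⁻ x, (Metric.closedBall (0 : EuclideanSpace ℝ (Fin d)) (t * r)).indicator ψ (t • x) := by
          rw [← lintegral_indicator measurableSet_closedBall]
          exact lintegral_congr key
      _ = ENNReal.ofReal ((t ^ d)⁻¹) *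
            ∫⁻ y, (Metric.closedBall (0 : EuclideanSpace ℝ (Fin d)) (t * r)).indicator ψ y :=
          aux_scale ht0 _ (hψm.indicator measurableSet_closedBall)
      _ = ∫⁻ y, W t y := by
          rw [← lintegral_const_mul' _ _ ENNReal.ofReal_ne_top]
          refine lintegral_congr fun y => ?_
          by_cases hy : y ∈ Metric.closedBall (0 : EuclideanSpace ℝ (Fin d)) (t * r)
          · simp only [hWdef, hψdef, hgdef, Set.indicator_of_mem hy]
            rw [← mul_assoc, ← ENNReal.ofReal_mul (by positivity),
              show (t^d)⁻¹ * ((1-t)^k * (t^(k+1))⁻¹ * ‖y‖^(k+1))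
                  = (1-t)^k * (t^(d+k+1))⁻¹ * ‖y‖^(k+1) from by
                    rw [show (t:ℝ)^(d+k+1) = t^d * t^(k+1) by
                      rw [← pow_add, Nat.add_assoc], mul_inv]
                    ring,
              ENNReal.ofReal_mul (mul_nonneg (pow_nonneg (by linarith) k) (by positivity)),
              mul_assoc]
          · simp [hWdef, Set.indicator_of_notMem hy]
  -- Claim C: pointwise bound on the t-integral
  have claimC : ∀ y, (∫⁻ t in Set.Ioo (0:ℝ) 1, W t y)
      ≤ B.indicator (fun y => ENNReal.ofReal (r ^ (k + d) / ((k:ℝ) + (d:ℝ))) *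
          (ENNReal.ofReal (‖y‖ ^ (1 - (d : ℤ))) * h y)) y := by
    intro y
    by_cases hyB : y ∈ B
    swap
    · have hz : ∀ t ∈ Set.Ioo (0:ℝ) 1, W t y = (fun _ : ℝ => (0:ℝ≥0∞)) t := by
        rintro t ⟨ht0, ht1⟩
        have hry : r < ‖y‖ := by
          by_contra hc; push_neg at hc; exact hyB (mem_closedBall_zero_iff.2 hc)
        have hy' : y ∉ Metric.closedBall (0 : EuclideanSpace ℝ (Fin d)) (t * r) := by
          rw [mem_closedBall_zero_iff]
          push_neg
          nlinarith
        simp [hWdef, Set.indicator_of_notMem hy']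
      rw [setLIntegral_congr_fun measurableSet_Ioo hz]
      simp
    · rw [Set.indicator_of_mem hyB]
      by_cases hy0 : y = 0
      · subst hy0
        have hz : ∀ t : ℝ, W t (0 : EuclideanSpace ℝ (Fin d)) = 0 := by
          intro t
          have hg0 : g (0 : EuclideanSpace ℝ (Fin d)) = 0 := by
            simp [hgdef]
          simp [hWdef, Set.indicator_apply, hg0]
        simp only [hz]
        simp
      · -- main case: 0 < ‖y‖ ≤ r
        have hn : 0 < ‖y‖ := norm_pos_iff.2 hy0
        have hyr : ‖y‖ ≤ r := mem_closedBall_zero_iff.1 hyB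
        set a : ℝ := ‖y‖ / r with hadef
        have ha0 : 0 < a := by positivity
        have ha1 : a ≤ 1 := (div_le_one hr).2 hyr
        have hdk1 : (1:ℕ) ≤ d + k := le_trans hd (Nat.le_add_right d k)
        have hdkR : (0:ℝ) < (d:ℝ) + (k:ℝ) := by
          have : (0:ℝ) < (d:ℝ) := by exact_mod_cast hd
          positivity
        have step1 : (∫⁻ t in Set.Ioo (0:ℝ) 1, W t y)
            ≤ ∫⁻ t in Set.Ioo (0:ℝ) 1,
                (Set.Icc a 1).indicator (fun t => ENNReal.ofReal ((t ^ (d + k + 1))⁻¹)) t * g y := by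
          refine setLIntegral_mono' measurableSet_Ioo fun t ht => ?_
          obtain ⟨ht0, ht1⟩ := ht
          by_cases hyt : y ∈ Metric.closedBall (0 : EuclideanSpace ℝ (Fin d)) (t * r)
          · have hta : a ≤ t := by
              rw [hadef, div_le_iff₀ hr]
              exact mem_closedBall_zero_iff.1 hyt
            simp only [hWdef, Set.indicator_of_mem hyt,
              Set.indicator_of_mem (Set.mem_Icc.2 ⟨hta, ht1.le⟩)]
            refine mul_le_mul_left (ENNReal.ofReal_le_ofReal ?_) _
            have h1 : (1 - t) ^ k ≤ 1 := pow_le_one₀ (by linarith) (by linarith)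
            calc (1-t)^k * (t ^ (d+k+1))⁻¹ ≤ 1 * (t ^ (d+k+1))⁻¹ :=
                   mul_le_mul_of_nonneg_right h1 (by positivity)
              _ = (t ^ (d+k+1))⁻¹ := one_mul _
          · simp only [hWdef, Set.indicator_of_notMem hyt, mul_zero]
            exact zero_le
        have hindm : Measurable fun t : ℝ =>
            (Set.Icc a 1).indicator (fun t => ENNReal.ofReal ((t ^ (d + k + 1))⁻¹)) t :=
          (((measurable_id.pow_const _).inv).ennreal_ofReal).indicator measurableSet_Icc
        have step2 : (∫⁻ t in Set.Ioo (0:ℝ) 1,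
              (Set.Icc a 1).indicator (fun t => ENNReal.ofReal ((t ^ (d + k + 1))⁻¹)) t * g y)
            = (∫⁻ t in Set.Ioo (0:ℝ) 1,
              (Set.Icc a 1).indicator (fun t => ENNReal.ofReal ((t ^ (d + k + 1))⁻¹)) t) * g y :=
          lintegral_mul_const _ hindm
        have hInt : IntegrableOn (fun t : ℝ => (t ^ (d+k+1))⁻¹) (Set.Icc a 1) := by
          apply ContinuousOn.integrableOn_compact isCompact_Icc
          apply ContinuousOn.inv₀ (continuous_pow _).continuousOn
          intro t ht
          exact pow_ne_zero _ (ne_of_gt (lt_of_lt_of_le ha0 ht.1))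
        have hnn : 0 ≤ᵐ[volume.restrict (Set.Icc a 1)] fun t : ℝ => (t ^ (d+k+1))⁻¹ := by
          filter_upwards [ae_restrict_mem measurableSet_Icc] with t ht
          have h0t : 0 < t := lt_of_lt_of_le ha0 ht.1
          positivity
        have step5 : (∫⁻ t in Set.Icc a 1, ENNReal.ofReal ((t ^ (d+k+1))⁻¹))
            = ENNReal.ofReal (∫ t in Set.Icc a 1, (t ^ (d+k+1))⁻¹) :=
          (ofReal_integral_eq_lintegral_ofReal hInt hnn).symm
        have hval : (∫ t in Set.Icc a 1, (t ^ (d+k+1))⁻¹)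
            = ((a ^ (d+k))⁻¹ - 1) / ((d:ℝ) + (k:ℝ)) := by
          rw [integral_Icc_eq_integral_Ioc, ← intervalIntegral.integral_of_le ha1]
          rw [show (fun t : ℝ => (t ^ (d+k+1))⁻¹) = fun t : ℝ => t ^ (-(d+k+1:ℕ):ℤ) from
            funext fun t => by rw [zpow_neg, zpow_natCast]]
          rw [integral_zpow (Or.inr ⟨by push_cast; omega,
            by intro hc; rw [Set.uIcc_of_le ha1, Set.mem_Icc] at hc; linarith [hc.1]⟩)]
          rw [show (-(d+k+1:ℕ):ℤ) + 1 = -(d+k:ℕ) by push_cast; ring]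
          rw [one_zpow, zpow_neg, zpow_natCast]
          rw [show ((-(d+k+1:ℕ):ℤ):ℝ) + 1 = -((d:ℝ)+(k:ℝ)) by push_cast; ring,
            div_neg, ← neg_div, neg_sub]
        have step6 : ENNReal.ofReal (∫ t in Set.Icc a 1, (t ^ (d+k+1))⁻¹)
            ≤ ENNReal.ofReal ((a ^ (d+k))⁻¹ / ((d:ℝ) + (k:ℝ))) := by
          rw [hval]
          apply ENNReal.ofReal_le_ofReal
          gcongr
          linarith
        have hfinal : ENNReal.ofReal ((a ^ (d+k))⁻¹ / ((d:ℝ) + (k:ℝ))) * g y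
            = ENNReal.ofReal (r ^ (k + d) / ((k:ℝ) + (d:ℝ))) *
              (ENNReal.ofReal (‖y‖ ^ (1 - (d : ℤ))) * h y) := by
          rw [hgdef]
          rw [← mul_assoc, ← ENNReal.ofReal_mul (by positivity), ← mul_assoc,
            ← ENNReal.ofReal_mul (by positivity)]
          congr 2
          have hyne : ‖y‖ ≠ 0 := hn.ne'
          have e1 : ‖y‖ ^ (1 - (d:ℤ)) = ‖y‖ ^ (k+1) * (‖y‖ ^ (d+k))⁻¹ := by
            rw [show (1 - (d:ℤ)) = ((k+1:ℕ):ℤ) - ((d+k:ℕ):ℤ) by push_cast; ring,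
              zpow_sub₀ hyne, zpow_natCast, zpow_natCast, div_eq_mul_inv]
          rw [e1, hadef, div_pow]
          have hre : r ≠ 0 := hr.ne'
          field_simp
          ring
        calc (∫⁻ t in Set.Ioo (0:ℝ) 1, W t y)
            ≤ _ := step1
          _ = _ := step2
          _ ≤ ENNReal.ofReal ((a ^ (d+k))⁻¹ / ((d:ℝ) + (k:ℝ))) * g y := by
              refine mul_le_mul_left ?_ _
              calc (∫⁻ t in Set.Ioo (0:ℝ) 1,
                    (Set.Icc a 1).indicator (fun t => ENNReal.ofReal ((t ^ (d + k + 1))⁻¹)) t)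
                  ≤ ∫⁻ t, (Set.Icc a 1).indicator
                      (fun t => ENNReal.ofReal ((t ^ (d + k + 1))⁻¹)) t :=
                    setLIntegral_le_lintegral _ _
                _ = ∫⁻ t in Set.Icc a 1, ENNReal.ofReal ((t ^ (d+k+1))⁻¹) :=
                    lintegral_indicator measurableSet_Icc _
                _ = ENNReal.ofReal (∫ t in Set.Icc a 1, (t ^ (d+k+1))⁻¹) := step5
                _ ≤ _ := step6
          _ = _ := hfinal
  -- Assemble everything
  calc (∫⁻ x in B, ENNReal.ofReal (‖x‖ ^ (k + 1)) *
          ∫⁻ t in Set.Ioo (0 : ℝ) 1, ENNReal.ofReal ((1 - t) ^ k) * h (t • x))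
      = ∫⁻ x in B, ∫⁻ t in Set.Ioo (0:ℝ) 1, F x t :=
        lintegral_congr fun x => (lintegral_const_mul' _ _ ENNReal.ofReal_ne_top).symm
    _ = ∫⁻ t in Set.Ioo (0:ℝ) 1, ∫⁻ x in B, F x t :=
        lintegral_lintegral_swap hFm.aemeasurable
    _ = ∫⁻ t in Set.Ioo (0:ℝ) 1, ∫⁻ y, W t y :=
        setLIntegral_congr_fun measurableSet_Ioo claimA
    _ = ∫⁻ y, ∫⁻ t in Set.Ioo (0:ℝ) 1, W t y :=
        lintegral_lintegral_swap hWm.aemeasurable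
    _ ≤ ∫⁻ y, B.indicator (fun y => ENNReal.ofReal (r ^ (k + d) / ((k:ℝ) + (d:ℝ))) *
          (ENNReal.ofReal (‖y‖ ^ (1 - (d : ℤ))) * h y)) y := lintegral_mono claimC
    _ = ∫⁻ y in B, ENNReal.ofReal (r ^ (k + d) / ((k:ℝ) + (d:ℝ))) *
          (ENNReal.ofReal (‖y‖ ^ (1 - (d : ℤ))) * h y) :=
        lintegral_indicator measurableSet_closedBall _
    _ = ENNReal.ofReal (r ^ (k + d) / ((k:ℝ) + (d:ℝ))) *
          ∫⁻ y in B, ENNReal.ofReal (‖y‖ ^ (1 - (d : ℤ))) * h y :=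
        lintegral_const_mul' _ _ ENNReal.ofReal_ne_top
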